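/- Let G be a finite nonabelian group with maol(G) = 3. Then every automorphism of G has order 1, 2 or 3 (so in particular Aut(G) is solvable), and G is a {2,3}-group, i.e., the only primes dividing |G| are 2 and 3 (so in particular G is solvable). -/

import Mathlib

open MulAction Subgroup

section Helpers

variable {G : Type*} [Group G] [Finite G]

-- every element has a small period under any automorphism
lemma exists_small_period (h3 : ∀ g : G, Nat.card (orbit (MulAut G) g) ≤ 3)
    (φ : MulAut G) (g : G) : ∃ m : ℕ, 0 < m ∧ m ≤ 3 ∧ φ ^ m • g = g := by
  have hninj : ¬ Function.Injective
      (fun i : Fin 4 => (⟨φ ^ (i : ℕ) • g, ⟨φ ^ (i : ℕ), rfl⟩⟩ : orbit (MulAut G) g)) := by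
    intro hinj
    have h4 := Nat.card_le_card_of_injective _ hinj
    simp only [Nat.card_eq_fintype_card, Fintype.card_fin] at h4
    have : (4:ℕ) ≤ 3 := le_trans h4 (h3 g)
    omega
  simp only [Function.Injective, not_forall] at hninj
  obtain ⟨i, j, hij, hne⟩ := hninj
  have hij' : φ ^ (i : ℕ) • g = φ ^ (j : ℕ) • g := by
    simpa using congrArg Subtype.val hij
  rcases Nat.lt_or_ge (i : ℕ) (j : ℕ) with hlt | hge
  · refine ⟨(j : ℕ) - (i : ℕ), by omega, by omega, ?_⟩
    have : φ ^ (i : ℕ) • (φ ^ ((j : ℕ) - (i : ℕ)) • g) = φ ^ (i : ℕ) • g := by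
      rw [smul_smul, ← pow_add]
      rw [show (i : ℕ) + ((j : ℕ) - (i : ℕ)) = (j : ℕ) by omega]
      exact hij'.symm
    exact smul_left_cancel _ this
  · have hlt : (j : ℕ) < (i : ℕ) := by
      rcases Nat.lt_or_ge (j : ℕ) (i : ℕ) with h | h
      · exact h
      · exfalso; exact hne (Fin.ext (by omega))
    refine ⟨(i : ℕ) - (j : ℕ), by omega, by omega, ?_⟩
    have : φ ^ (j : ℕ) • (φ ^ ((i : ℕ) - (j : ℕ)) • g) = φ ^ (j : ℕ) • g := by
      rw [smul_smul, ← pow_add]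
      rw [show (j : ℕ) + ((i : ℕ) - (j : ℕ)) = (i : ℕ) by omega]
      exact hij'
    exact smul_left_cancel _ this

lemma pow_smul_fix {φ : MulAut G} {g : G} (h : φ • g = g) (t : ℕ) : φ ^ t • g = g := by
  induction t with
  | zero => simp
  | succ n ih => rw [pow_succ, mul_smul, h, ih]

lemma order_small (h3 : ∀ g : G, Nat.card (orbit (MulAut G) g) ≤ 3) (φ : MulAut G) :
    orderOf φ = 1 ∨ orderOf φ = 2 ∨ orderOf φ = 3 := by
  haveI : Finite (MulAut G) :=
    Finite.of_injective (fun ψ : MulAut G => (ψ : G → G)) DFunLike.coe_injective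
  have key : ∀ (ψ : MulAut G) (x : G), ψ ^ 6 • x = x := by
    intro ψ x
    obtain ⟨m, hm0, hm3, hm⟩ := exists_small_period h3 ψ x
    interval_cases m
    · have := pow_smul_fix (by simpa using hm) 6; simpa using this
    · have := pow_smul_fix (φ := ψ ^ 2) hm 3; rwa [← pow_mul] at this
    · have := pow_smul_fix (φ := ψ ^ 3) hm 2; rwa [← pow_mul] at this
  have h6 : φ ^ 6 = 1 := by
    ext x
    have := key φ x
    simpa [MulAut.smul_def] using this
  have hdvd : orderOf φ ∣ 6 := orderOf_dvd_of_pow_eq_one h6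
  have hne6 : orderOf φ ≠ 6 := by
    intro h6'
    -- get g with φ³ • g ≠ g
    have h3ne : φ ^ 3 ≠ 1 := by
      intro c
      have := orderOf_dvd_of_pow_eq_one c
      rw [h6'] at this
      exact absurd (Nat.le_of_dvd (by norm_num) this) (by norm_num)
    have h2ne : φ ^ 2 ≠ 1 := by
      intro c
      have := orderOf_dvd_of_pow_eq_one c
      rw [h6'] at this
      exact absurd (Nat.le_of_dvd (by norm_num) this) (by norm_num)
    obtain ⟨g, hg⟩ : ∃ g : G, φ ^ 3 • g ≠ g := by
      by_contra hcon
      push_neg at hcon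
      exact h3ne (by ext x; simpa [MulAut.smul_def] using hcon x)
    obtain ⟨a, ha⟩ : ∃ a : G, φ ^ 2 • a ≠ a := by
      by_contra hcon
      push_neg at hcon
      exact h2ne (by ext x; simpa [MulAut.smul_def] using hcon x)
    -- period of g is 2
    have hg2 : φ ^ 2 • g = g := by
      obtain ⟨m, hm0, hm3, hm⟩ := exists_small_period h3 φ g
      interval_cases m
      · exact absurd (pow_smul_fix (by simpa using hm) 3) hg
      · exact hm
      · exact absurd hm hg
    have hg1 : φ • g ≠ g := by
      intro c
      exact hg (pow_smul_fix c 3)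
    -- period of a is 3
    have ha3 : φ ^ 3 • a = a := by
      obtain ⟨m, hm0, hm3, hm⟩ := exists_small_period h3 φ a
      interval_cases m
      · exact absurd (pow_smul_fix (by simpa using hm) 2) ha
      · exact absurd hm ha
      · exact hm
    -- the element g * a has period > 3 : contradiction
    obtain ⟨m, hm0, hm3, hm⟩ := exists_small_period h3 φ (g * a)
    have h2case : φ ^ 2 • (g * a) ≠ g * a := by
      intro c
      rw [smul_mul', hg2] at c
      exact ha (mul_left_cancel c)
    interval_cases m
    · exact h2case (pow_smul_fix (by simpa using hm) 2)
    · exact h2case hm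
    · rw [smul_mul', ha3] at hm
      have : φ ^ 3 • g = g := mul_right_cancel hm
      rw [pow_succ', mul_smul, hg2] at this
      exact hg1 this
  have hpos : 0 < orderOf φ := orderOf_pos φ
  have hle : orderOf φ ≤ 6 := Nat.le_of_dvd (by norm_num) hdvd
  interval_cases h : orderOf φ <;> revert hdvd hne6 <;> decide

end Helpers

lemma derivedSeries_eq_bot_mono {H : Type*} [Group H] {n N : ℕ}
    (h : derivedSeries H n = ⊥) (hnN : n ≤ N) : derivedSeries H N = ⊥ := by
  obtain ⟨k, rfl⟩ := Nat.exists_eq_add_of_le hnN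
  induction k with
  | zero => simpa using h
  | succ k ih =>
    rw [show n + (k+1) = (n+k) + 1 by omega, derivedSeries_succ, ih (by omega), commutator_bot_left]

lemma isSolvable_pi {ι : Type*} [Finite ι] {H : ι → Type*} [∀ i, Group (H i)]
    (h : ∀ i, IsSolvable (H i)) : IsSolvable (∀ i, H i) := by
  choose n hn using fun i => (h i).solvable
  obtain ⟨N, hN⟩ := (Set.finite_range n).bddAbove
  refine ⟨⟨N, ?_⟩⟩
  rw [eq_bot_iff]
  intro x hx
  have key : ∀ i, x i ∈ derivedSeries (H i) N := by
    intro i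
    have hmap := map_derivedSeries_le_derivedSeries (Pi.evalMonoidHom H i) N
    exact hmap ⟨x, hx, rfl⟩
  rw [Subgroup.mem_bot]
  funext i
  have hbi : derivedSeries (H i) N = ⊥ :=
    derivedSeries_eq_bot_mono (hn i) (hN (Set.mem_range_self i))
  have := key i
  rw [hbi, Subgroup.mem_bot] at this
  exact this

lemma s3_solvable : IsSolvable (Equiv.Perm (Fin 3)) := by
  have hcard : Nat.card (alternatingGroup (Fin 3)) = 3 := by
    have h2 := two_mul_card_alternatingGroup (α := Fin 3)
    rw [Fintype.card_perm, Fintype.card_fin] at h2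
    rw [Nat.card_eq_fintype_card]
    have h6 : (3:ℕ).factorial = 6 := rfl
    omega
  haveI : Fact (Nat.Prime 3) := ⟨by norm_num⟩
  haveI hcy : IsCyclic (alternatingGroup (Fin 3)) := isCyclic_of_prime_card hcard
  letI := hcy.commGroup
  haveI : Group.IsSolvable (alternatingGroup (Fin 3)) := inferInstance
  refine solvable_of_ker_le_range (alternatingGroup (Fin 3)).subtype Equiv.Perm.sign ?_
  rw [Subgroup.range_subtype, alternatingGroup_eq_sign_ker]

lemma perm_solvable_of_card_le {α : Type*} [Finite α] (h : Nat.card α ≤ 3) :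
    IsSolvable (Equiv.Perm α) := by
  haveI := Fintype.ofFinite α
  rw [Nat.card_eq_fintype_card] at h
  obtain ⟨e⟩ : Nonempty (α ↪ Fin 3) :=
    Function.Embedding.nonempty_iff_card_le.mpr (by simpa using h)
  haveI : Group.IsSolvable (Equiv.Perm (Fin 3)) := s3_solvable
  exact solvable_of_solvable_injective (Equiv.Perm.viaEmbeddingHom_injective e)

lemma aut_solvable {G : Type*} [Group G] [Finite G]
    (h3 : ∀ g : G, Nat.card (orbit (MulAut G) g) ≤ 3) : IsSolvable (MulAut G) := by
  set Ω := orbitRel.Quotient (MulAut G) G with hΩ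
  let fib : Ω → Type _ := fun ω => {x : G // (Quotient.mk'' x : Ω) = ω}
  have hmem : ∀ (φ : MulAut G) (x : G), (Quotient.mk'' (φ • x) : Ω) = Quotient.mk'' x :=
    fun φ x => Quotient.sound' ⟨φ, rfl⟩
  let F : MulAut G →* ∀ ω : Ω, Equiv.Perm (fib ω) :=
    { toFun := fun φ => fun ω =>
        { toFun := fun x => ⟨φ • x.1, by rw [hmem]; exact x.2⟩
          invFun := fun x => ⟨φ⁻¹ • x.1, by rw [hmem]; exact x.2⟩
          left_inv := fun x => by simp
          right_inv := fun x => by simp }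
      map_one' := by
        funext ω
        ext x
        simp
      map_mul' := fun φ ψ => by
        funext ω
        ext x
        simp [mul_smul] }
  have hinj : Function.Injective F := by
    intro φ ψ hfψ
    ext x
    have := congrFun hfψ (Quotient.mk'' x)
    have h2 := congrFun (congrArg (fun (e : Equiv.Perm (fib (Quotient.mk'' x))) => (e : fib _ → fib _)) this) ⟨x, rfl⟩
    simpa [MulAut.smul_def, F] using congrArg Subtype.val h2
  haveI : Group.IsSolvable (∀ ω : Ω, Equiv.Perm (fib ω)) := by
    apply isSolvable_pi
    intro ω
    apply perm_solvable_of_card_le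
    obtain ⟨g, rfl⟩ := Quotient.exists_rep ω
    have : Nat.card (fib ⟦g⟧) = Nat.card (orbit (MulAut G) g) := by
      apply Nat.card_congr
      apply Equiv.subtypeEquivRight
      intro x
      rw [show (⟦g⟧ : Ω) = Quotient.mk'' g from rfl, Quotient.eq'']
      exact Iff.rfl
    rw [this]
    exact h3 g
  exact solvable_of_solvable_injective hinj

lemma primes_23 {G : Type*} [Group G] [Finite G]
    (horder : ∀ φ : MulAut G, orderOf φ = 1 ∨ orderOf φ = 2 ∨ orderOf φ = 3)
    {p : ℕ} (hp : p.Prime) (hdvd : p ∣ Nat.card G) : p = 2 ∨ p = 3 := by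
  by_contra hcon
  push_neg at hcon
  obtain ⟨hp2, hp3⟩ := hcon
  have hp4 : p ≠ 4 := by rintro rfl; norm_num at hp
  have hp5 : 5 ≤ p := by have := hp.two_le; omega
  haveI : Fact p.Prime := ⟨hp⟩
  haveI : Finite (MulAut G) :=
    Finite.of_injective (fun ψ : MulAut G => (ψ : G → G)) DFunLike.coe_injective
  obtain ⟨P⟩ := (Sylow.nonempty : Nonempty (Sylow p G))
  -- every element of P is central
  have hPZ : (P : Subgroup G) ≤ Subgroup.center G := by
    intro x hx
    obtain ⟨kk, hkk⟩ := P.2 ⟨x, hx⟩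
    have hxord : orderOf x ∣ p ^ kk := by
      apply orderOf_dvd_of_pow_eq_one
      simpa using congrArg Subtype.val hkk
    have hconjord : orderOf (MulAut.conj x) ∣ p ^ kk :=
      (orderOf_map_dvd (MulAut.conj : G →* MulAut G) x).trans hxord
    have h1 : orderOf (MulAut.conj x) = 1 := by
      rcases horder (MulAut.conj x) with h | h | h
      · exact h
      · exfalso
        have h2 : (2:ℕ) ∣ p ^ kk := h ▸ hconjord
        have := (Nat.prime_dvd_prime_iff_eq Nat.prime_two hp).mp
          (Nat.prime_two.dvd_of_dvd_pow h2)
        omega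
      · exfalso
        have h2 : (3:ℕ) ∣ p ^ kk := h ▸ hconjord
        have := (Nat.prime_dvd_prime_iff_eq Nat.prime_three hp).mp
          (Nat.prime_three.dvd_of_dvd_pow h2)
        omega
    have hcx : MulAut.conj x = 1 := orderOf_eq_one_iff.mp h1
    rw [Subgroup.mem_center_iff]
    intro g
    have := congrArg (fun ψ : MulAut G => ψ g) hcx
    simp only [MulAut.conj_apply, MulAut.one_apply] at this
    calc g * x = x * (x⁻¹ * g * x) := by group
    _ = x * g := by rw [show x⁻¹ * g * x = g from ?_]
                    conv_lhs => rw [← this]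
                    group
  haveI hPn : (P : Subgroup G).Normal := by
    constructor
    intro x hx g
    have hc := Subgroup.mem_center_iff.mp (hPZ hx) g
    have : g * x * g⁻¹ = x := by rw [hc]; group
    rwa [this]
  obtain ⟨Hc, hH⟩ := Subgroup.exists_right_complement'_of_coprime
    (N := (P : Subgroup G)) P.card_coprime_index
  -- pick the exponent k
  obtain ⟨ζ, hζgen⟩ := IsCyclic.exists_generator (α := (ZMod p)ˣ)
  have hζord : orderOf ζ = p - 1 := by
    have := orderOf_eq_card_of_forall_mem_zpowers hζgen
    rwa [Nat.card_eq_fintype_card, ZMod.card_units_eq_totient, Nat.totient_prime hp] at this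
  set k := ((ζ : ZMod p)).val with hkdef
  have hkcast : ((k : ℕ) : ZMod p) = (ζ : ZMod p) := ZMod.natCast_rightInverse _
  have hpk : ¬ p ∣ k := by
    intro hdk
    have h0 : ((k : ℕ) : ZMod p) = 0 := by
      rwa [ZMod.natCast_eq_zero_iff]
    rw [hkcast] at h0
    exact ζ.ne_zero h0
  have hcop : Nat.Coprime (p ^ (Nat.card G).factorization p) k :=
    Nat.Coprime.pow_left _ ((Nat.Prime.coprime_iff_not_dvd hp).mpr hpk)
  have hcardP : Nat.card (P : Subgroup G) = p ^ (Nat.card G).factorization p :=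
    P.card_eq_multiplicity
  -- decomposition functions
  let u : G → G := fun g => ((hH.equiv g).1 : G)
  let t : G → G := fun g => ((hH.equiv g).2 : G)
  have umem : ∀ g, u g ∈ (P : Subgroup G) := fun g => (hH.equiv g).1.2
  have tmem : ∀ g, t g ∈ Hc := fun g => (hH.equiv g).2.2
  have hsplit : ∀ g, u g * t g = g := fun g => hH.equiv_fst_mul_equiv_snd g
  have hdec : ∀ {a b : G}, a ∈ (P : Subgroup G) → b ∈ Hc → u (a * b) = a ∧ t (a * b) = b := by
    intro a b ha hb
    have : hH.equiv (a * b) = (⟨a, ha⟩, ⟨b, hb⟩) := by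
      rw [Equiv.apply_eq_iff_eq_symm_apply]
      exact (hH.equiv_symm_apply (⟨a, ha⟩, ⟨b, hb⟩)).symm
    constructor
    · show ((hH.equiv (a * b)).1 : G) = a
      rw [this]
    · show ((hH.equiv (a * b)).2 : G) = b
      rw [this]
  have hcent : ∀ {x : G}, x ∈ (P : Subgroup G) → ∀ g : G, x * g = g * x := by
    intro x hx g
    exact (Subgroup.mem_center_iff.mp (hPZ hx) g).symm
  -- the automorphism
  let f : G →* G :=
  { toFun := fun g => (u g) ^ k * t g
    map_one' := by
      have h1 := hdec (one_mem (P : Subgroup G)) (one_mem Hc)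
      rw [mul_one] at h1
      show u 1 ^ k * t 1 = 1
      rw [h1.1, h1.2, one_pow, mul_one]
    map_mul' := by
      intro a b
      have hab : (u a * u b) * (t a * t b) = a * b := by
        have h1 : t a * u b = u b * t a := (hcent (umem b) (t a)).symm
        calc (u a * u b) * (t a * t b) = u a * (u b * t a) * t b := by group
        _ = u a * (t a * u b) * t b := by rw [h1]
        _ = (u a * t a) * (u b * t b) := by group
        _ = a * b := by rw [hsplit, hsplit]
      have h2 := hdec (mul_mem (umem a) (umem b)) (mul_mem (tmem a) (tmem b))
      rw [hab] at h2
      show u (a*b) ^ k * t (a*b) = (u a ^ k * t a) * (u b ^ k * t b)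
      rw [h2.1, h2.2]
      have hcomm : Commute (u a) (u b) := hcent (umem a) (u b)
      rw [hcomm.mul_pow]
      have h3 : t a * u b ^ k = u b ^ k * t a :=
        (hcent (pow_mem (umem b) k) (t a)).symm
      calc u a ^ k * u b ^ k * (t a * t b)
          = u a ^ k * (u b ^ k * t a) * t b := by group
      _ = u a ^ k * (t a * u b ^ k) * t b := by rw [h3]
      _ = u a ^ k * t a * (u b ^ k * t b) := by group }
  have hfinj : Function.Injective f := by
    rw [injective_iff_map_eq_one]
    intro g hg
    have hg' : u g ^ k * t g = 1 := hg
    have h2 := hdec (pow_mem (umem g) k) (tmem g)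
    rw [hg'] at h2
    have h1 := hdec (one_mem (P : Subgroup G)) (one_mem Hc)
    rw [mul_one] at h1
    have huk : u g ^ k = 1 := by rw [← h2.1, h1.1]
    have htg : t g = 1 := by rw [← h2.2, h1.2]
    have hordu : orderOf (u g) ∣ k := orderOf_dvd_of_pow_eq_one huk
    have hordP : orderOf (u g) ∣ p ^ (Nat.card G).factorization p := by
      rw [← hcardP]
      exact Subgroup.orderOf_dvd_natCard _ (umem g)
    have : orderOf (u g) = 1 :=
      Nat.eq_one_of_dvd_coprimes hcop hordP hordu
    have hu1 : u g = 1 := orderOf_eq_one_iff.mp this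
    rw [← hsplit g, hu1, htg, mul_one]
  let φ : MulAut G := MulEquiv.ofBijective f (Finite.injective_iff_bijective.mp hfinj)
  -- an element of order p in P
  have hcarddvd : p ∣ Nat.card (P : Subgroup G) := by
    rw [hcardP]
    exact dvd_pow_self p (hp.factorization_pos_of_dvd (Nat.card_pos).ne' hdvd).ne'
  obtain ⟨x0, hx0⟩ := exists_prime_orderOf_dvd_card' (G := (P : Subgroup G)) p hcarddvd
  set g₀ : G := (x0 : G) with hg₀def
  have hg₀P : g₀ ∈ (P : Subgroup G) := x0.2
  have hg₀ord : orderOf g₀ = p := by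
    have h := orderOf_injective (P : Subgroup G).subtype (Subgroup.subtype_injective _) x0
    rw [Subgroup.coe_subtype] at h
    exact h.trans hx0
  have hfP : ∀ x, x ∈ (P : Subgroup G) → f x = x ^ k := by
    intro x hx
    have h2 := hdec hx (one_mem Hc)
    rw [mul_one] at h2
    show u x ^ k * t x = x ^ k
    rw [h2.1, h2.2, mul_one]
  have hiter : ∀ j : ℕ, (φ ^ j : MulAut G) g₀ = g₀ ^ (k ^ j) := by
    intro j
    induction j with
    | zero => simp
    | succ n ih =>
      rw [pow_succ']
      rw [MulAut.mul_apply, ih]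
      have : f (g₀ ^ k ^ n) = (g₀ ^ k ^ n) ^ k := hfP _ (pow_mem hg₀P _)
      calc φ (g₀ ^ k ^ n) = (g₀ ^ k ^ n) ^ k := this
      _ = g₀ ^ (k ^ (n+1)) := by rw [← pow_mul, ← pow_succ]
  obtain ⟨m, hm0, hm3, hφm⟩ : ∃ m : ℕ, 0 < m ∧ m ≤ 3 ∧ φ ^ m = 1 := by
    rcases horder φ with h | h | h
    · exact ⟨1, by norm_num, by norm_num, h ▸ pow_orderOf_eq_one φ⟩
    · exact ⟨2, by norm_num, by norm_num, h ▸ pow_orderOf_eq_one φ⟩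
    · exact ⟨3, by norm_num, by norm_num, h ▸ pow_orderOf_eq_one φ⟩
  have hfix : g₀ ^ (k ^ m) = g₀ ^ 1 := by
    rw [pow_one, ← hiter m, hφm]
    rfl
  have hmod : k ^ m ≡ 1 [MOD p] := by
    have := pow_eq_pow_iff_modEq.mp hfix
    rwa [hg₀ord] at this
  have hzmod : ((k : ZMod p)) ^ m = 1 := by
    have := (ZMod.natCast_eq_natCast_iff _ _ _).mpr hmod
    push_cast at this
    exact this
  have hζm : ζ ^ m = 1 := by
    apply Units.ext
    push_cast
    rw [← hkcast]
    exact hzmod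
  have : p - 1 ∣ m := by
    rw [← hζord]
    exact orderOf_dvd_of_pow_eq_one hζm
  have := Nat.le_of_dvd hm0 this
  omega

/-- `maol G` is the maximum length of an orbit of the natural action of `Aut(G)` on `G`. -/
noncomputable def maol (G : Type*) [Group G] : ℕ :=
  ⨆ g : G, Nat.card (MulAction.orbit (MulAut G) g)

theorem stmt_13 (G : Type*) [Group G] [Finite G]
    (hna : ¬ ∀ a b : G, a * b = b * a) (h : maol G = 3) :
    (∀ φ : MulAut G, orderOf φ = 1 ∨ orderOf φ = 2 ∨ orderOf φ = 3) ∧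
      IsSolvable (MulAut G) ∧
      (∀ p : ℕ, p.Prime → p ∣ Nat.card G → p = 2 ∨ p = 3) ∧
      IsSolvable G := by
  have h3 : ∀ g : G, Nat.card (orbit (MulAut G) g) ≤ 3 := by
    intro g
    have hb : BddAbove (Set.range fun g : G => Nat.card (orbit (MulAut G) g)) :=
      (Set.finite_range _).bddAbove
    have hle := le_ciSup hb g
    rw [show (⨆ g : G, Nat.card (orbit (MulAut G) g)) = maol G from rfl, h] at hle
    exact hle
  have horder : ∀ φ : MulAut G, orderOf φ = 1 ∨ orderOf φ = 2 ∨ orderOf φ = 3 :=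
    fun φ => order_small h3 φ
  haveI hAut : Group.IsSolvable (MulAut G) := aut_solvable h3
  refine ⟨horder, hAut, fun p hp hd => primes_23 horder hp hd, ?_⟩
  haveI : Group.IsSolvable (Subgroup.center G) :=
    Group.isSolvable_of_comm (fun a b => Subtype.ext (Subgroup.mem_center_iff.mp b.2 a))
  refine solvable_of_ker_le_range (Subgroup.center G).subtype MulAut.conj ?_
  intro x hx
  rw [MonoidHom.mem_ker] at hx
  refine ⟨⟨x, ?_⟩, rfl⟩
  rw [Subgroup.mem_center_iff]
  intro g
  have hc := congrArg (fun ψ : MulAut G => ψ g) hx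
  simp only [MulAut.conj_apply, MulAut.one_apply] at hc
  nth_rewrite 1 [← hc]
  group
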